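/- Let d ≥ 2, β ≥ 70, α̃ := 2 + 2·log d + β·log² d, and define on Ω := {y ∈ ℝ^d : y_k > 0 ∀k, Σ_k y_k ≤ 1} the regularizer ψ(y) := −α̃·log(Σ_k y_k) + (1/Σ_k y_k)·Σ_k y_k·log y_k, with Bregman divergence D_ψ(z‖y) := ψ(z) − ψ(y) − ⟨∇ψ(y), z − y⟩. Let T ≥ 1, let u^{(0)} := 0 and u^{(1)},…,u^{(T)} ∈ ℝ^d, set U^{(t)} := Σ_{τ=1}^{t−1} u^{(τ)}, let κ^{(t)} > 0 be scalars, and let η_1 ≥ η_2 ≥ … ≥ η_{T+1} be positive step sizes. Define F_t(y) := −η_t·⟨U^{(t)} + κ^{(t)}·u^{(t−1)}, y⟩ + ψ(y) and G_t(z) := −η_t·⟨U^{(t)}, z⟩ + ψ(z), and suppose y^{(t)} minimizes F_t over Ω and z^{(t)} minimizes G_t over Ω for each t ∈ {1,…,T+1}. Then for every y ∈ Ω: Σ_{t=1}^T ⟨y − y^{(t)}, u^{(t)}⟩ ≤ ψ(y)/η_{T+1} − ψ(y^{(1)})/η_1 + Σ_{t=1}^T ⟨z^{(t+1)} − y^{(t)},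 u^{(t)} − κ^{(t)}·u^{(t−1)}⟩ − Σ_{t=1}^T (1/η_t)·[D_ψ(y^{(t)}‖z^{(t)}) + D_ψ(z^{(t+1)}‖y^{(t)})] + Σ_{t=1}^T (1/η_t − 1/η_{t+1})·ψ(z^{(t+1)}). -/

import Mathlib

/-- The (strictly positive) lifted simplex `Ω = {y : y_k > 0 ∀k, Σ_k y_k ≤ 1}`. -/
def liftedSimplex (d : ℕ) : Set (Fin d → ℝ) :=
  {y | (∀ k, 0 < y k) ∧ (∑ k, y k) ≤ 1}

/-- Total mass `Λ(y) = Σ_k y_k`. -/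
noncomputable def lmass {d : ℕ} (y : Fin d → ℝ) : ℝ := ∑ k, y k

/-- The lifted regularizer `ψ(y) = −α̃ log Λ(y) + (1/Λ(y)) Σ_k y_k log y_k`. -/
noncomputable def psiReg {d : ℕ} (αt : ℝ) (y : Fin d → ℝ) : ℝ :=
  -αt * Real.log (lmass y) + (1 / lmass y) * ∑ k, y k * Real.log (y k)

/-- The gradient of `ψ` on the (strictly positive) lifted simplex. -/
noncomputable def gradPsi {d : ℕ} (αt : ℝ) (y : Fin d → ℝ) (i : Fin d) : ℝ :=
  -(αt - 1) / lmass y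
    - (1 / lmass y) * ∑ k, (y k / lmass y) * Real.log (y k / lmass y)
    + Real.log (y i / lmass y) / lmass y

/-- Bregman divergence `D_ψ(z‖y) = ψ(z) − ψ(y) − ⟨∇ψ(y), z − y⟩`. -/
noncomputable def DPsi {d : ℕ} (αt : ℝ) (z y : Fin d → ℝ) : ℝ :=
  psiReg αt z - psiReg αt y - ∑ i, gradPsi αt y i * (z i - y i)

lemma deriv_nonneg_of_min (φ : ℝ → ℝ) (a : ℝ) (h : HasDerivAt φ a 0)
    (hm : ∀ s ∈ Set.Ioc (0:ℝ) 1, φ 0 ≤ φ s) : 0 ≤ a := by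
  have h1 : Filter.Tendsto (slope φ 0) (nhdsWithin 0 (Set.Ioi 0)) (nhds a) :=
    (hasDerivAt_iff_tendsto_slope.mp h).mono_left
      (nhdsWithin_mono 0 (fun x hx => ne_of_gt hx))
  refine ge_of_tendsto h1 ?_
  filter_upwards [Ioc_mem_nhdsGT (by norm_num : (0:ℝ) < 1)] with s hs
  have h0 : 0 < s := hs.1
  have h2 := hm s hs
  have : slope φ 0 s = (φ s - φ 0) / (s - 0) := by
    simp [slope_def_field]
  rw [this]
  apply div_nonneg <;> linarith

lemma seg_mem (d : ℕ) (p w : Fin d → ℝ) (hp : p ∈ liftedSimplex d) (hw : w ∈ liftedSimplex d)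
    (s : ℝ) (hs : s ∈ Set.Ioc (0:ℝ) 1) : (fun i => p i + s * (w i - p i)) ∈ liftedSimplex d := by
  obtain ⟨hp1, hp2⟩ := hp
  obtain ⟨hw1, hw2⟩ := hw
  obtain ⟨hs1, hs2⟩ := hs
  constructor
  · intro k
    show 0 < p k + s * (w k - p k)
    have := hp1 k; have := hw1 k
    nlinarith
  · have hsum : (∑ k, (p k + s * (w k - p k))) = (∑ k, p k) + s * ((∑ k, w k) - (∑ k, p k)) := by
      rw [Finset.sum_add_distrib, ← Finset.mul_sum, Finset.sum_sub_distrib]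
    rw [hsum]
    nlinarith

lemma hasDerivAt_psi_line {d : ℕ} (αt : ℝ) (p v : Fin d → ℝ)
    (hp : ∀ k, 0 < p k) (hΛ : 0 < lmass p) :
    HasDerivAt (fun s : ℝ => psiReg αt (fun i => p i + s * v i))
      (∑ i, gradPsi αt p i * v i) 0 := by
  have hΛne : lmass p ≠ 0 := ne_of_gt hΛ
  have hL : HasDerivAt (fun s : ℝ => ∑ k, (p k + s * v k)) (∑ k, v k) 0 := by
    apply HasDerivAt.fun_sum
    intro k _
    simpa using ((hasDerivAt_id (0:ℝ)).mul_const (v k)).const_add (p k)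
  have hL0 : (∑ k, (p k + (0:ℝ) * v k)) = lmass p := by simp [lmass]
  have hlog : HasDerivAt (fun s : ℝ => Real.log (∑ k, (p k + s * v k)))
      ((∑ k, v k) / lmass p) 0 := by
    have := hL.log (by rw [hL0]; exact hΛne)
    rwa [hL0] at this
  have hN : HasDerivAt (fun s : ℝ => ∑ k, (p k + s * v k) * Real.log (p k + s * v k))
      (∑ k, (v k * Real.log (p k) + v k)) 0 := by
    apply HasDerivAt.fun_sum
    intro k _
    have h1 : HasDerivAt (fun s : ℝ => p k + s * v k) (v k) 0 := by
      simpa using ((hasDerivAt_id (0:ℝ)).mul_const (v k)).const_add (p k)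
    have h2 := h1.log (by simpa using ne_of_gt (hp k))
    have h3 := h1.mul h2
    refine h3.congr_deriv ?_
    have hpk : p k + (0:ℝ) * v k = p k := by ring
    rw [hpk]
    have hpk0 : p k ≠ 0 := (hp k).ne'
    have : p k * (v k / p k) = v k := by
      field_simp
    rw [this]
  have hN0 : (∑ k, (p k + (0:ℝ) * v k) * Real.log (p k + (0:ℝ) * v k))
      = ∑ k, p k * Real.log (p k) := by simp
  have hfrac : HasDerivAt (fun s : ℝ =>
      (∑ k, (p k + s * v k) * Real.log (p k + s * v k)) / (∑ k, (p k + s * v k)))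
      (((∑ k, (v k * Real.log (p k) + v k)) * lmass p
        - (∑ k, p k * Real.log (p k)) * (∑ k, v k)) / (lmass p)^2) 0 := by
    have := hN.div hL (by rw [hL0]; exact hΛne)
    rwa [hL0, hN0] at this
  have hmain := (hlog.const_mul (-αt)).add hfrac
  have hfun : (fun s : ℝ => psiReg αt (fun i => p i + s * v i))
      = (fun s : ℝ => -αt * Real.log (∑ k, (p k + s * v k))
        + (∑ k, (p k + s * v k) * Real.log (p k + s * v k)) / (∑ k, (p k + s * v k))) := by
    funext s
    rw [psiReg]
    rw [one_div, inv_mul_eq_div]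
    rfl
  rw [hfun]
  refine hmain.congr_deriv ?_
  -- now the algebraic identity for the derivative value
  have hQ : ∑ k, (p k / lmass p) * Real.log (p k / lmass p)
      = (∑ k, p k * Real.log (p k)) / lmass p - Real.log (lmass p) := by
    have e : ∀ k : Fin d, (p k / lmass p) * Real.log (p k / lmass p)
        = (p k * Real.log (p k)) / lmass p - (Real.log (lmass p) / lmass p) * p k := by
      intro k
      rw [Real.log_div (ne_of_gt (hp k)) hΛne]
      field_simp
    rw [Finset.sum_congr rfl (fun k _ => e k), Finset.sum_sub_distrib, ← Finset.sum_div,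
      ← Finset.mul_sum]
    have : (∑ k, p k) = lmass p := rfl
    rw [this]
    field_simp
  have hg : ∀ i, gradPsi αt p i
      = (-(αt - 1) / lmass p - (1 / lmass p) * ((∑ k, p k * Real.log (p k)) / lmass p
          - Real.log (lmass p)) - Real.log (lmass p) / lmass p)
        + (Real.log (p i) / lmass p) := by
    intro i
    rw [gradPsi, hQ, Real.log_div (ne_of_gt (hp i)) hΛne]
    ring
  have hsplit : ∑ i, gradPsi αt p i * v i
      = (-(αt - 1) / lmass p - (1 / lmass p) * ((∑ k, p k * Real.log (p k)) / lmass p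
          - Real.log (lmass p)) - Real.log (lmass p) / lmass p) * (∑ i, v i)
        + (∑ i, Real.log (p i) * v i) / lmass p := by
    have e1 : ∀ i : Fin d, gradPsi αt p i * v i
        = (-(αt - 1) / lmass p - (1 / lmass p) * ((∑ k, p k * Real.log (p k)) / lmass p
            - Real.log (lmass p)) - Real.log (lmass p) / lmass p) * v i
          + (Real.log (p i) * v i) / lmass p := fun i => by rw [hg i]; ring
    rw [Finset.sum_congr rfl (fun i _ => e1 i), Finset.sum_add_distrib, ← Finset.mul_sum,
      ← Finset.sum_div]
  have hNa : (∑ k, (v k * Real.log (p k) + v k)) = (∑ i, Real.log (p i) * v i) + (∑ k, v k) := by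
    rw [Finset.sum_add_distrib]
    congr 1
    exact Finset.sum_congr rfl (fun i _ => by ring)
  rw [hsplit, hNa]
  field_simp
  ring

lemma sum_Icc_telescope (f : ℕ → ℝ) (T : ℕ) :
    ∑ t ∈ Finset.Icc 1 T, (f t - f (t + 1)) = f 1 - f (T + 1) := by
  induction T with
  | zero => simp
  | succ n ih => rw [Finset.sum_Icc_succ_top (by omega), ih]; ring

lemma min_bregman {d : ℕ} (hd : 1 ≤ d) (αt : ℝ) (c : Fin d → ℝ) (p : Fin d → ℝ)
    (hpΩ : p ∈ liftedSimplex d)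
    (hmin : ∀ w ∈ liftedSimplex d,
      (∑ i, c i * p i) + psiReg αt p ≤ (∑ i, c i * w i) + psiReg αt w) :
    ∀ w ∈ liftedSimplex d,
      (∑ i, c i * p i) + psiReg αt p + DPsi αt w p ≤ (∑ i, c i * w i) + psiReg αt w := by
  intro w hw
  have hp : ∀ k, 0 < p k := hpΩ.1
  have : Nonempty (Fin d) := ⟨⟨0, hd⟩⟩
  have hΛ : 0 < lmass p := Finset.sum_pos (fun k _ => hp k) Finset.univ_nonempty
  have hφ : HasDerivAt (fun s : ℝ => (∑ i, c i * (p i + s * (w i - p i)))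
        + psiReg αt (fun i => p i + s * (w i - p i)))
      ((∑ i, c i * (w i - p i)) + ∑ i, gradPsi αt p i * (w i - p i)) 0 := by
    apply HasDerivAt.add
    · apply HasDerivAt.fun_sum
      intro i _
      simpa using (((hasDerivAt_id (0:ℝ)).mul_const (w i - p i)).const_add (p i)).const_mul (c i)
    · exact hasDerivAt_psi_line αt p (fun i => w i - p i) hp hΛ
  have hnn : 0 ≤ (∑ i, c i * (w i - p i)) + ∑ i, gradPsi αt p i * (w i - p i) := by
    apply deriv_nonneg_of_min _ _ hφ
    intro s hs
    have hmem := seg_mem d p w hpΩ hw s hs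
    have h1 := hmin _ hmem
    have h0 : (fun i => p i + (0:ℝ) * (w i - p i)) = p := by funext i; ring
    simpa [h0] using h1
  have hlin : (∑ i, c i * (w i - p i)) = (∑ i, c i * w i) - (∑ i, c i * p i) := by
    rw [← Finset.sum_sub_distrib]
    exact Finset.sum_congr rfl (fun i _ => by ring)
  have hD : DPsi αt w p = psiReg αt w - psiReg αt p - ∑ i, gradPsi αt p i * (w i - p i) := rfl
  rw [hD]
  rw [hlin] at hnn
  linarith

/-- OFTRL one-step inequality with time-varying step sizes.  With
`F_t(y) = −η_t⟨U^{(t)} + κ^{(t)} u^{(t−1)}, y⟩ + ψ(y)` and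
`G_t(z) = −η_t⟨U^{(t)}, z⟩ + ψ(z)`, where `U^{(t)} = Σ_{τ<t} u^{(τ)}`, and minimizers
`y^{(t)}, z^{(t)}` over `Ω`, the stated regret inequality holds for every `y ∈ Ω`. -/
theorem oftrl_one_step_inequality (d : ℕ) (hd : 2 ≤ d)
    (β : ℝ) (hβ : 70 ≤ β)
    (αt : ℝ) (hαt : αt = 2 + 2 * Real.log d + β * (Real.log d) ^ 2)
    (T : ℕ) (hT : 1 ≤ T)
    (u : ℕ → Fin d → ℝ) (hu0 : u 0 = 0)
    (U : ℕ → Fin d → ℝ) (hU : ∀ t, U t = ∑ τ ∈ Finset.Ico 1 t, u τ)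
    (κ : ℕ → ℝ) (hκ : ∀ t, 0 < κ t)
    (η : ℕ → ℝ) (hηpos : ∀ t ∈ Finset.Icc 1 (T + 1), 0 < η t)
    (hηmono : ∀ t ∈ Finset.Icc 1 T, η (t + 1) ≤ η t)
    (F G : ℕ → (Fin d → ℝ) → ℝ)
    (hF : ∀ t yy, F t yy =
      -η t * (∑ i, (U t i + κ t * u (t - 1) i) * yy i) + psiReg αt yy)
    (hG : ∀ t zz, G t zz = -η t * (∑ i, U t i * zz i) + psiReg αt zz)
    (y z : ℕ → Fin d → ℝ)
    (hyΩ : ∀ t ∈ Finset.Icc 1 (T + 1), y t ∈ liftedSimplex d)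
    (hzΩ : ∀ t ∈ Finset.Icc 1 (T + 1), z t ∈ liftedSimplex d)
    (hymin : ∀ t ∈ Finset.Icc 1 (T + 1), ∀ y' ∈ liftedSimplex d, F t (y t) ≤ F t y')
    (hzmin : ∀ t ∈ Finset.Icc 1 (T + 1), ∀ z' ∈ liftedSimplex d, G t (z t) ≤ G t z') :
    ∀ yc ∈ liftedSimplex d,
      (∑ t ∈ Finset.Icc 1 T, ∑ i, (yc i - y t i) * u t i) ≤
        psiReg αt yc / η (T + 1) - psiReg αt (y 1) / η 1
        + (∑ t ∈ Finset.Icc 1 T,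
            ∑ i, (z (t + 1) i - y t i) * (u t i - κ t * u (t - 1) i))
        - (∑ t ∈ Finset.Icc 1 T,
            (1 / η t) * (DPsi αt (y t) (z t) + DPsi αt (z (t + 1)) (y t)))
        + (∑ t ∈ Finset.Icc 1 T,
            (1 / η t - 1 / η (t + 1)) * psiReg αt (z (t + 1))) := by
  intro yc hyc
  have hd1 : 1 ≤ d := by omega
  have hmem : ∀ t, t ∈ Finset.Icc 1 T → t ∈ Finset.Icc 1 (T + 1) := by
    intro t ht; simp only [Finset.mem_Icc] at *; omega
  have hmem' : ∀ t, t ∈ Finset.Icc 1 T → t + 1 ∈ Finset.Icc 1 (T + 1) := by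
    intro t ht; simp only [Finset.mem_Icc] at *; omega
  have h1mem : (1 : ℕ) ∈ Finset.Icc 1 (T + 1) := by simp
  have hT1mem : T + 1 ∈ Finset.Icc 1 (T + 1) := by simp only [Finset.mem_Icc]; omega
  set Φ : ℕ → ℝ := fun t => -(∑ i, U t i * z t i) + psiReg αt (z t) / η t with hΦdef
  have hstep : ∀ t ∈ Finset.Icc 1 T,
      Φ t - Φ (t + 1) ≤
        (∑ i, (z (t + 1) i - y t i) * (u t i - κ t * u (t - 1) i))
        + (∑ i, y t i * u t i)
        - (1 / η t) * (DPsi αt (y t) (z t) + DPsi αt (z (t + 1)) (y t))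
        + (1 / η t - 1 / η (t + 1)) * psiReg αt (z (t + 1)) := by
    intro t ht
    have ht' : 1 ≤ t ∧ t ≤ T := by simpa using ht
    have hηt : 0 < η t := hηpos t (hmem t ht)
    have hηt1 : 0 < η (t + 1) := hηpos (t + 1) (hmem' t ht)
    have hminI : ∀ w ∈ liftedSimplex d,
        (∑ i, (fun i => -η t * (U t i + κ t * u (t - 1) i)) i * (y t) i) + psiReg αt (y t)
          ≤ (∑ i, (fun i => -η t * (U t i + κ t * u (t - 1) i)) i * w i) + psiReg αt w := by
      intro w hw
      have h := hymin t (hmem t ht) w hw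
      rw [hF, hF] at h
      have e : ∀ x : Fin d → ℝ,
          (∑ i, (fun i => -η t * (U t i + κ t * u (t - 1) i)) i * x i)
          = -η t * (∑ i, (U t i + κ t * u (t - 1) i) * x i) := by
        intro x
        rw [Finset.mul_sum]
        exact Finset.sum_congr rfl (fun i _ => by ring)
      rw [e, e]
      linarith
    have hI := min_bregman hd1 αt _ (y t) (hyΩ t (hmem t ht)) hminI
      (z (t + 1)) (hzΩ (t + 1) (hmem' t ht))
    have hminII : ∀ w ∈ liftedSimplex d,
        (∑ i, (fun i => -η t * U t i) i * (z t) i) + psiReg αt (z t)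
          ≤ (∑ i, (fun i => -η t * U t i) i * w i) + psiReg αt w := by
      intro w hw
      have h := hzmin t (hmem t ht) w hw
      rw [hG, hG] at h
      have e : ∀ x : Fin d → ℝ,
          (∑ i, (fun i => -η t * U t i) i * x i) = -η t * (∑ i, U t i * x i) := by
        intro x
        rw [Finset.mul_sum]
        exact Finset.sum_congr rfl (fun i _ => by ring)
      rw [e, e]
      linarith
    have hII := min_bregman hd1 αt _ (z t) (hzΩ t (hmem t ht)) hminII
      (y t) (hyΩ t (hmem t ht))
    have eA : ∀ x : Fin d → ℝ,
        (∑ i, (fun i => -η t * (U t i + κ t * u (t - 1) i)) i * x i)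
        = -η t * (∑ i, U t i * x i) + (-η t * κ t) * (∑ i, u (t - 1) i * x i) := by
      intro x
      rw [Finset.mul_sum, Finset.mul_sum, ← Finset.sum_add_distrib]
      exact Finset.sum_congr rfl (fun i _ => by ring)
    have eB : ∀ x : Fin d → ℝ,
        (∑ i, (fun i => -η t * U t i) i * x i) = -η t * (∑ i, U t i * x i) := by
      intro x
      rw [Finset.mul_sum]
      exact Finset.sum_congr rfl (fun i _ => by ring)
    rw [eA, eA] at hI
    rw [eB, eB] at hII
    have hM : psiReg αt (z t) + DPsi αt (y t) (z t) + DPsi αt (z (t + 1)) (y t)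
          - psiReg αt (z (t + 1))
        ≤ ((∑ i, U t i * z t i) - (∑ i, U t i * z (t + 1) i)
            - κ t * (∑ i, u (t - 1) i * z (t + 1) i)
            + κ t * (∑ i, u (t - 1) i * y t i)) * η t := by
      nlinarith [hI, hII]
    have hdiv : (psiReg αt (z t) + DPsi αt (y t) (z t) + DPsi αt (z (t + 1)) (y t)
          - psiReg αt (z (t + 1))) / η t
        ≤ (∑ i, U t i * z t i) - (∑ i, U t i * z (t + 1) i)
            - κ t * (∑ i, u (t - 1) i * z (t + 1) i)
            + κ t * (∑ i, u (t - 1) i * y t i) := (div_le_iff₀ hηt).mpr hM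
    have hUsucc : (∑ i, U (t + 1) i * z (t + 1) i)
        = (∑ i, U t i * z (t + 1) i) + ∑ i, u t i * z (t + 1) i := by
      have hUe : U (t + 1) = U t + u t := by
        rw [hU (t + 1), hU t, Finset.sum_Ico_succ_top (by omega : 1 ≤ t)]
      rw [hUe, ← Finset.sum_add_distrib]
      exact Finset.sum_congr rfl (fun i _ => by simp [Pi.add_apply]; ring)
    have hS1 : (∑ i, (z (t + 1) i - y t i) * (u t i - κ t * u (t - 1) i))
        = (∑ i, u t i * z (t + 1) i) - (∑ i, y t i * u t i)
          - κ t * (∑ i, u (t - 1) i * z (t + 1) i)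
          + κ t * (∑ i, u (t - 1) i * y t i) := by
      rw [Finset.mul_sum, Finset.mul_sum, ← Finset.sum_sub_distrib, ← Finset.sum_sub_distrib,
        ← Finset.sum_add_distrib]
      exact Finset.sum_congr rfl (fun i _ => by ring)
    have hΦt : Φ t = -(∑ i, U t i * z t i) + psiReg αt (z t) / η t := by rw [hΦdef]
    have hΦt1 : Φ (t + 1)
        = -(∑ i, U (t + 1) i * z (t + 1) i) + psiReg αt (z (t + 1)) / η (t + 1) := by
      rw [hΦdef]
    rw [hΦt, hΦt1, hS1, hUsucc]
    have hexp : (psiReg αt (z t) + DPsi αt (y t) (z t) + DPsi αt (z (t + 1)) (y t)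
          - psiReg αt (z (t + 1))) / η t
        = psiReg αt (z t) / η t + DPsi αt (y t) (z t) / η t
          + DPsi αt (z (t + 1)) (y t) / η t - psiReg αt (z (t + 1)) / η t := by ring
    rw [hexp] at hdiv
    have e2 : (1 / η t) * (DPsi αt (y t) (z t) + DPsi αt (z (t + 1)) (y t))
        = DPsi αt (y t) (z t) / η t + DPsi αt (z (t + 1)) (y t) / η t := by ring
    have e3 : (1 / η t - 1 / η (t + 1)) * psiReg αt (z (t + 1))
        = psiReg αt (z (t + 1)) / η t - psiReg αt (z (t + 1)) / η (t + 1) := by ring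
    linarith [hdiv, e2, e3]
  have hsum := Finset.sum_le_sum hstep
  rw [sum_Icc_telescope Φ T] at hsum
  have hsplit : (∑ t ∈ Finset.Icc 1 T,
        ((∑ i, (z (t + 1) i - y t i) * (u t i - κ t * u (t - 1) i))
        + (∑ i, y t i * u t i)
        - (1 / η t) * (DPsi αt (y t) (z t) + DPsi αt (z (t + 1)) (y t))
        + (1 / η t - 1 / η (t + 1)) * psiReg αt (z (t + 1))))
      = (∑ t ∈ Finset.Icc 1 T, ∑ i, (z (t + 1) i - y t i) * (u t i - κ t * u (t - 1) i))
        + (∑ t ∈ Finset.Icc 1 T, ∑ i, y t i * u t i)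
        - (∑ t ∈ Finset.Icc 1 T,
            (1 / η t) * (DPsi αt (y t) (z t) + DPsi αt (z (t + 1)) (y t)))
        + (∑ t ∈ Finset.Icc 1 T, (1 / η t - 1 / η (t + 1)) * psiReg αt (z (t + 1))) := by
    rw [Finset.sum_add_distrib, Finset.sum_sub_distrib, Finset.sum_add_distrib]
  rw [hsplit] at hsum
  have hηT1 : 0 < η (T + 1) := hηpos _ hT1mem
  have hend : (∑ i, U (T + 1) i * yc i) ≤ psiReg αt yc / η (T + 1) - Φ (T + 1) := by
    have h := hzmin (T + 1) hT1mem yc hyc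
    rw [hG, hG] at h
    have h2 : (∑ i, U (T + 1) i * yc i) - (∑ i, U (T + 1) i * z (T + 1) i)
        ≤ (psiReg αt yc - psiReg αt (z (T + 1))) / η (T + 1) := by
      rw [le_div_iff₀ hηT1]
      linarith
    have hΦT : Φ (T + 1)
        = -(∑ i, U (T + 1) i * z (T + 1) i) + psiReg αt (z (T + 1)) / η (T + 1) := by
      rw [hΦdef]
    have e : (psiReg αt yc - psiReg αt (z (T + 1))) / η (T + 1)
        = psiReg αt yc / η (T + 1) - psiReg αt (z (T + 1)) / η (T + 1) := by ring
    rw [e] at h2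
    rw [hΦT]
    linarith
  have hΦ1 : psiReg αt (y 1) / η 1 ≤ Φ 1 := by
    have hU1 : U 1 = 0 := by rw [hU 1]; simp
    have h := hymin 1 h1mem (z 1) (hzΩ 1 h1mem)
    rw [hF, hF] at h
    simp only [hU1, hu0, Pi.zero_apply, mul_zero, zero_add, add_zero, zero_mul,
      Finset.sum_const_zero] at h
    have hη1 : 0 < η 1 := hηpos 1 h1mem
    have hΦ1e : Φ 1 = -(∑ i, U 1 i * z 1 i) + psiReg αt (z 1) / η 1 := by rw [hΦdef]
    rw [hΦ1e, hU1]
    simp only [Pi.zero_apply, zero_mul, Finset.sum_const_zero, neg_zero, zero_add]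
    gcongr
  have hLHS : (∑ t ∈ Finset.Icc 1 T, ∑ i, (yc i - y t i) * u t i)
      = (∑ i, U (T + 1) i * yc i) - ∑ t ∈ Finset.Icc 1 T, ∑ i, y t i * u t i := by
    have e1 : ∀ t, (∑ i, (yc i - y t i) * u t i)
        = (∑ i, yc i * u t i) - ∑ i, y t i * u t i := by
      intro t
      rw [← Finset.sum_sub_distrib]
      exact Finset.sum_congr rfl (fun i _ => by ring)
    rw [Finset.sum_congr rfl (fun t _ => e1 t), Finset.sum_sub_distrib]
    congr 1
    rw [Finset.sum_comm]
    refine Finset.sum_congr rfl (fun i _ => ?_)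
    rw [hU (T + 1), show Finset.Ico 1 (T + 1) = Finset.Icc 1 T from Finset.Ico_add_one_right_eq_Icc 1 T,
      Finset.sum_apply, Finset.sum_mul]
    exact Finset.sum_congr rfl (fun t _ => by ring)
  rw [hLHS]
  linarith [hsum, hend, hΦ1]
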